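/- Let K be a nonempty closed subset of ℝⁿ and let pr : ℝⁿ → ℝⁿ be a Borel measurable selection of the metric projection onto K. For Lebesgue almost all y ∈ ℝⁿ, pr is differentiable at y in the extended sense, and the derivative matrix A at such y is symmetric and positive semidefinite; in particular its diagonal entries satisfy ∂ᵢprᵢ(y) = Aᵢᵢ ≥ 0 for i = 1, …, n. -/

import Mathlib

open MeasureTheory Metric Asymptotics Filter
open scoped RealInnerProductSpace Topology

/-- The set of points whose metric projection onto `K` is unique. -/
def uniqSet (n : ℕ) (K : Set (EuclideanSpace ℝ (Fin n))) : Set (EuclideanSpace ℝ (Fin n)) :=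
  {y | ∃! x, x ∈ K ∧ dist y x = infDist y K}

/-- `f : D → ℝⁿ` is differentiable at `y ∈ D` in the extended sense with derivative `A`:
there is a neighborhood `N` of `y` such that `N \ D` is Lebesgue null and
`f x = f y + A (x - y) + o(‖x - y‖)` for `x ∈ D ∩ N` as `x → y`. -/
def DiffExtended {n : ℕ} (D : Set (EuclideanSpace ℝ (Fin n)))
    (f : EuclideanSpace ℝ (Fin n) → EuclideanSpace ℝ (Fin n))
    (y : EuclideanSpace ℝ (Fin n))
    (A : EuclideanSpace ℝ (Fin n) →L[ℝ] EuclideanSpace ℝ (Fin n)) : Prop :=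
  y ∈ D ∧ ∃ N ∈ 𝓝 y, volume (N \ D) = 0 ∧
    (fun x => f x - f y - A (x - y)) =o[𝓝[D ∩ N] y] fun x => x - y

variable {n : ℕ}
local notation "E" => EuclideanSpace ℝ (Fin n)


lemma lipschitz_image_null {C : NNReal} {f : E → E} (h : LipschitzWith C f) {s : Set E}
    (hs : volume s = 0) : volume (f '' s) = 0 := by
  have h1 : (volume : Measure E) ≪ μH[Module.finrank ℝ E] :=
    MeasureTheory.Measure.absolutelyContinuous_isAddHaarMeasure _ _
  have h2 : (μH[Module.finrank ℝ E] : Measure E) ≪ volume :=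
    MeasureTheory.Measure.absolutelyContinuous_isAddHaarMeasure _ _
  apply h1
  have h3 := h.hausdorffMeasure_image_le (d := (Module.finrank ℝ E : ℝ)) (by positivity) s
  have h4 : μH[(Module.finrank ℝ E : ℝ)] s = 0 := h2 hs
  rw [h4, mul_zero] at h3
  exact le_antisymm h3 (zero_le)

/-- The convex potential whose subgradients contain all nearest points. -/
noncomputable def fK (K : Set E) : E → ℝ := fun z => (‖z‖^2 - (infDist z K)^2)/2

lemma fK_continuous (K : Set E) : Continuous (fK K) := by
  unfold fK
  exact (((continuous_norm.pow 2).sub ((continuous_infDist_pt K).pow 2)).div_const 2)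

lemma subgradK {K : Set E} {y q : E} (hq : q ∈ K) (hyq : dist y q = infDist y K) (z : E) :
    fK K y + ⟪q, z - y⟫ ≤ fK K z := by
  have h1 : infDist z K ≤ dist z q := infDist_le_dist_of_mem hq
  have h0 : 0 ≤ infDist z K := infDist_nonneg
  have h2 : (infDist z K)^2 ≤ ‖z - q‖^2 := by
    rw [← dist_eq_norm]; exact pow_le_pow_left₀ h0 h1 2
  have h3 : ‖y - q‖^2 = (infDist y K)^2 := by rw [← dist_eq_norm, hyq]
  have e1 : ‖z - q‖^2 = ‖z‖^2 - 2*⟪z,q⟫ + ‖q‖^2 := norm_sub_sq_real z q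
  have e2 : ‖y - q‖^2 = ‖y‖^2 - 2*⟪y,q⟫ + ‖q‖^2 := norm_sub_sq_real y q
  have e3 : ⟪q, z - y⟫ = ⟪z,q⟫ - ⟪y,q⟫ := by
    rw [inner_sub_right, real_inner_comm q z, real_inner_comm q y]
  unfold fK
  rw [e3]
  nlinarith

lemma convex_segK {K : Set E} (pr : E → E)
    (hsel : ∀ y, pr y ∈ K ∧ dist y (pr y) = infDist y K)
    (y z : E) {t : ℝ} (ht0 : 0 ≤ t) (ht1 : t ≤ 1) :
    fK K (y + t • (z - y)) ≤ fK K y + t * (fK K z - fK K y) := by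
  set m := y + t • (z - y) with hm
  obtain ⟨hqK, hqd⟩ := hsel m
  have h1 := subgradK hqK hqd y
  have h2 := subgradK hqK hqd z
  have e1 : y - m = (-t) • (z - y) := by rw [hm]; module
  have e2 : z - m = (1 - t) • (z - y) := by rw [hm]; module
  rw [e1, real_inner_smul_right] at h1
  rw [e2, real_inner_smul_right] at h2
  nlinarith [h1, h2]

lemma prox_subgrad {K : Set E} (pr : E → E)
    (hsel : ∀ y, pr y ∈ K ∧ dist y (pr y) = infDist y K)
    {R : E → E}
    (hRmin : ∀ w x, fK K (R w) + ‖R w - w‖^2/2 ≤ fK K x + ‖x - w‖^2/2)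
    (w z : E) : fK K (R w) + ⟪w - R w, z - R w⟫ ≤ fK K z := by
  set z1 := R w with hz1
  set u := z - z1 with hu
  have key : ∀ ε > (0:ℝ), fK K z1 + ⟪w - z1, u⟫ ≤ fK K z + ε := by
    intro ε hε
    set t := min 1 (2*ε/(‖u‖^2+1)) with htdef
    have hupos : (0:ℝ) < ‖u‖^2 + 1 := by positivity
    have ht0 : 0 < t := lt_min one_pos (by positivity)
    have ht1 : t ≤ 1 := min_le_left _ _
    have hc := convex_segK pr hsel z1 z (le_of_lt ht0) ht1
    have hmin := hRmin w (z1 + t • u)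
    have hexp : ‖z1 + t • u - w‖^2 = ‖z1 - w‖^2 + 2*(t*⟪z1 - w, u⟫) + t^2*‖u‖^2 := by
      have : z1 + t • u - w = (z1 - w) + t • u := by abel
      rw [this, norm_add_sq_real, real_inner_smul_right, norm_smul, Real.norm_eq_abs,
        abs_of_pos ht0, mul_pow]
    have hzz : z1 + t • (z - z1) = z1 + t • u := rfl
    rw [hzz] at hc
    -- from hmin and hc : 0 ≤ t*(fK K z - fK K z1) + t*⟪z1-w,u⟫ + t^2*‖u‖^2/2
    have h4 : 0 ≤ (fK K z - fK K z1) + ⟪z1 - w, u⟫ + t*‖u‖^2/2 := by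
      have h5 : 0 ≤ t*((fK K z - fK K z1) + ⟪z1 - w, u⟫ + t*‖u‖^2/2) := by nlinarith
      nlinarith
    have htb : t*‖u‖^2/2 ≤ ε := by
      have : t ≤ 2*ε/(‖u‖^2+1) := min_le_right _ _
      rw [le_div_iff₀ hupos] at this
      nlinarith [norm_nonneg u]
    have hinner : ⟪w - z1, u⟫ = -⟪z1 - w, u⟫ := by
      rw [← neg_sub z1 w, inner_neg_left]
    linarith
  by_contra hcon
  push_neg at hcon
  have := key ((fK K z1 + ⟪w - z1, u⟫ - fK K z)/2) (by linarith)
  linarith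

lemma inner_aux (x1 x2 r1 r2 : E) :
    ⟪x1 - r1, r2 - r1⟫ + ⟪x2 - r2, r1 - r2⟫ = ⟪x1 - x2, r2 - r1⟫ + ‖r1 - r2‖^2 := by
  rw [← real_inner_self_eq_norm_sq]
  simp only [inner_sub_left, inner_sub_right]
  simp only [real_inner_comm r2 r1, real_inner_comm x1 r1, real_inner_comm x2 r2,
    real_inner_comm x1 r2, real_inner_comm x2 r1, real_inner_comm x1 x2]
  ring

lemma prox_firm {K : Set E} (pr : E → E)
    (hsel : ∀ y, pr y ∈ K ∧ dist y (pr y) = infDist y K)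
    {R : E → E}
    (hRmin : ∀ w x, fK K (R w) + ‖R w - w‖^2/2 ≤ fK K x + ‖x - w‖^2/2)
    (w1 w2 : E) : ‖R w1 - R w2‖^2 ≤ ⟪w1 - w2, R w1 - R w2⟫ := by
  have h1 := prox_subgrad pr hsel hRmin w1 (R w2)
  have h2 := prox_subgrad pr hsel hRmin w2 (R w1)
  have haux := inner_aux w1 w2 (R w1) (R w2)
  have hflip : ⟪w1 - w2, R w2 - R w1⟫ = -⟪w1 - w2, R w1 - R w2⟫ := by
    rw [← inner_neg_right]; congr 1; abel
  rw [hflip] at haux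
  linarith

lemma prox_lipschitz {K : Set E} (pr : E → E)
    (hsel : ∀ y, pr y ∈ K ∧ dist y (pr y) = infDist y K)
    {R : E → E}
    (hRmin : ∀ w x, fK K (R w) + ‖R w - w‖^2/2 ≤ fK K x + ‖x - w‖^2/2) :
    LipschitzWith 1 R := by
  rw [lipschitzWith_iff_dist_le_mul]
  intro w1 w2
  rw [NNReal.coe_one, one_mul, dist_eq_norm, dist_eq_norm]
  rcases eq_or_ne (R w1) (R w2) with h | h
  · rw [h, sub_self, norm_zero]; exact norm_nonneg _
  · have hfirm := prox_firm pr hsel hRmin w1 w2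
    have hcs : ⟪w1 - w2, R w1 - R w2⟫ ≤ ‖w1 - w2‖ * ‖R w1 - R w2‖ := real_inner_le_norm _ _
    have hpos : 0 < ‖R w1 - R w2‖ := by
      rw [norm_pos_iff]; exact sub_ne_zero_of_ne h
    nlinarith

/-- If `p` is a subgradient of `fK K` at `y`, then `y` is the prox of `y + p`. -/
lemma prox_of_subgrad {K : Set E}
    {R : E → E}
    (hRmin : ∀ w x, fK K (R w) + ‖R w - w‖^2/2 ≤ fK K x + ‖x - w‖^2/2)
    {y p : E} (hp : ∀ z, fK K y + ⟪p, z - y⟫ ≤ fK K z) :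
    R (y + p) = y := by
  set w := y + p with hw
  set z1 := R w with hz1
  have hmin := hRmin w y
  have hsub := hp z1
  have e0 : y - w = -p := by rw [hw]; abel
  have e1 : ‖y - w‖^2 = ‖p‖^2 := by rw [e0, norm_neg]
  have e2 : ‖z1 - w‖^2 = ‖z1 - y‖^2 - 2*⟪p, z1 - y⟫ + ‖p‖^2 := by
    have h : z1 - w = (z1 - y) - p := by rw [hw]; abel
    rw [h, norm_sub_sq_real, real_inner_comm]
  have hn : 0 ≤ ‖z1 - y‖^2 := by positivity
  have : ‖z1 - y‖^2 ≤ 0 := by nlinarith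
  have : ‖z1 - y‖ = 0 := by nlinarith [norm_nonneg (z1 - y)]
  have := norm_eq_zero.mp this
  have : z1 = y := by rwa [sub_eq_zero] at this
  exact this

lemma prox_phi {K : Set E} (pr : E → E)
    (hsel : ∀ y, pr y ∈ K ∧ dist y (pr y) = infDist y K)
    {R : E → E}
    (hRmin : ∀ w x, fK K (R w) + ‖R w - w‖^2/2 ≤ fK K x + ‖x - w‖^2/2)
    (y : E) : R (y + pr y) = y :=
  prox_of_subgrad hRmin (fun z => subgradK (hsel y).1 (hsel y).2 z)

lemma exists_prox {K : Set E} (pr : E → E)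
    (hsel : ∀ y, pr y ∈ K ∧ dist y (pr y) = infDist y K) (w : E) :
    ∃ z : E, ∀ x : E, fK K z + ‖z - w‖^2/2 ≤ fK K x + ‖x - w‖^2/2 := by
  set ρ : ℝ := 2*‖pr w‖ + 1 with hρ
  have hρpos : 0 < ρ := by positivity
  have hcont : Continuous (fun x : E => fK K x + ‖x - w‖^2/2) := by
    apply (fK_continuous K).add
    exact ((continuous_norm.comp (continuous_id.sub continuous_const)).pow 2).div_const 2
  obtain ⟨z, hzball, hzmin⟩ :=
    (isCompact_closedBall w ρ).exists_isMinOn ⟨w, mem_closedBall_self hρpos.le⟩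
      hcont.continuousOn
  refine ⟨z, fun x => ?_⟩
  rcases le_or_gt (dist x w) ρ with hx | hx
  · exact hzmin (mem_closedBall.mpr hx)
  · have hzw : fK K z + ‖z - w‖^2/2 ≤ fK K w := by
      have := hzmin (mem_closedBall_self hρpos.le)
      simpa using this
    have hsub := subgradK (hsel w).1 (hsel w).2 x
    have hcs : -(‖pr w‖ * ‖x - w‖) ≤ ⟪pr w, x - w⟫ := by
      have := abs_real_inner_le_norm (pr w) (x - w)
      have := abs_le.mp this
      linarith [this.1]
    have hxw : ρ ≤ ‖x - w‖ := by rw [← dist_eq_norm]; exact hx.le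
    have : fK K w + ρ/2 ≤ fK K x + ‖x - w‖^2/2 := by nlinarith [norm_nonneg (pr w)]
    linarith

/-- The Moreau-type potential whose gradient is `R`. -/
noncomputable def psiK (K : Set E) (R : E → E) : E → ℝ :=
  fun v => ‖v‖^2/2 - (fK K (R v) + ‖R v - v‖^2/2)

lemma psi_lower {K : Set E}
    {R : E → E}
    (hRmin : ∀ w x, fK K (R w) + ‖R w - w‖^2/2 ≤ fK K x + ‖x - w‖^2/2)
    (w w' : E) : psiK K R w + ⟪R w, w' - w⟫ ≤ psiK K R w' := by
  have h := hRmin w' (R w)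
  unfold psiK
  have e1 : ‖R w - w'‖^2 = ‖R w‖^2 - 2*⟪R w, w'⟫ + ‖w'‖^2 := by
    rw [norm_sub_sq_real, real_inner_comm]
  have e2 : ‖R w - w‖^2 = ‖R w‖^2 - 2*⟪R w, w⟫ + ‖w‖^2 := by
    rw [norm_sub_sq_real, real_inner_comm]
  have e3 : ⟪R w, w' - w⟫ = ⟪R w, w'⟫ - ⟪R w, w⟫ := inner_sub_right _ _ _
  have e4 : ‖R w' - w'‖^2 = ‖R w' - w'‖^2 := rfl
  nlinarith [h]

lemma psi_hasFDerivAt {K : Set E} (pr : E → E)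
    (hsel : ∀ y, pr y ∈ K ∧ dist y (pr y) = infDist y K)
    {R : E → E}
    (hRmin : ∀ w x, fK K (R w) + ‖R w - w‖^2/2 ≤ fK K x + ‖x - w‖^2/2)
    (w : E) : HasFDerivAt (psiK K R) (innerSL ℝ (R w)) w := by
  have hbound : ∀ w', |psiK K R w' - psiK K R w - ⟪R w, w' - w⟫| ≤ ‖w' - w‖^2 := by
    intro w'
    have h1 := psi_lower hRmin w w'
    have h2 := psi_lower hRmin w' w
    have hlip := prox_lipschitz pr hsel hRmin
    have hl := lipschitzWith_iff_dist_le_mul.mp hlip w' w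
    rw [NNReal.coe_one, one_mul, dist_eq_norm, dist_eq_norm] at hl
    have hcs : ⟪R w' - R w, w' - w⟫ ≤ ‖R w' - R w‖ * ‖w' - w‖ := real_inner_le_norm _ _
    have e5 : ⟪R w', w - w'⟫ = -⟪R w', w' - w⟫ := by
      rw [← inner_neg_right]; congr 1; abel
    have e6 : ⟪R w' - R w, w' - w⟫ = ⟪R w', w' - w⟫ - ⟪R w, w' - w⟫ := inner_sub_left _ _ _
    rw [abs_le]
    constructor
    · linarith [h1, sq_nonneg ‖w' - w‖]
    · nlinarith [norm_nonneg (w' - w), norm_nonneg (R w' - R w)]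
  rw [hasFDerivAt_iff_isLittleO_nhds_zero]
  have h1 : (fun h : E => psiK K R (w + h) - psiK K R w - (innerSL ℝ (R w)) h)
      =O[𝓝 0] (fun h : E => ‖h‖^2) := by
    apply Asymptotics.IsBigO.of_bound 1
    filter_upwards with h
    have := hbound (w + h)
    simp only [add_sub_cancel_left] at this
    simpa [Real.norm_eq_abs, abs_of_nonneg (sq_nonneg ‖h‖)] using this
  have h2 : (fun h : E => ‖h‖^2) =o[𝓝 (0:E)] (fun h : E => h) := by
    rw [Asymptotics.isLittleO_iff]
    intro c hc
    have : ∀ᶠ h : E in 𝓝 0, ‖h‖ < c := by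
      have := Metric.ball_mem_nhds (0:E) hc
      filter_upwards [this] with h hh
      simpa [dist_eq_norm] using hh
    filter_upwards [this] with h hh
    have h0 : (0:ℝ) ≤ ‖h‖ := norm_nonneg h
    have : ‖h‖^2 ≤ c * ‖h‖ := by nlinarith
    simpa [Real.norm_eq_abs, abs_of_nonneg (sq_nonneg ‖h‖)] using this
  exact h1.trans_isLittleO h2

lemma prox_deriv_symm {K : Set E} (pr : E → E)
    (hsel : ∀ y, pr y ∈ K ∧ dist y (pr y) = infDist y K)
    {R : E → E}
    (hRmin : ∀ w x, fK K (R w) + ‖R w - w‖^2/2 ≤ fK K x + ‖x - w‖^2/2)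
    {w0 : E} {B : E →L[ℝ] E} (hB : HasFDerivAt R B w0) :
    ∀ u v : E, ⟪B u, v⟫ = ⟪B v, u⟫ := by
  intro u v
  have hψ : ∀ w : E, HasFDerivAt (psiK K R) (innerSL ℝ (R w)) w :=
    psi_hasFDerivAt pr hsel hRmin
  have hg' : HasFDerivAt (fun w => innerSL ℝ (R w)) ((innerSL ℝ).comp B) w0 :=
    ((innerSL ℝ).hasFDerivAt).comp w0 hB
  have := second_derivative_symmetric hψ hg' u v
  simpa using this

lemma line_hasDerivAt {R : E → E} {w0 : E} {B : E →L[ℝ] E} (hB : HasFDerivAt R B w0)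
    (v : E) : HasDerivAt (fun t : ℝ => R (w0 + t • v)) (B v) 0 := by
  have hg : HasDerivAt (fun t : ℝ => w0 + t • v) v 0 := by
    have h1 : HasDerivAt (fun t : ℝ => t • v) ((1:ℝ) • v) 0 :=
      (hasDerivAt_id (0:ℝ)).smul_const v
    rw [one_smul] at h1
    exact h1.const_add w0
  have hB' : HasFDerivAt R B (w0 + (0:ℝ) • v) := by
    simpa using hB
  exact hB'.comp_hasDerivAt (0:ℝ) hg

lemma prox_deriv_firm {K : Set E} (pr : E → E)
    (hsel : ∀ y, pr y ∈ K ∧ dist y (pr y) = infDist y K)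
    {R : E → E}
    (hRmin : ∀ w x, fK K (R w) + ‖R w - w‖^2/2 ≤ fK K x + ‖x - w‖^2/2)
    {w0 : E} {B : E →L[ℝ] E} (hB : HasFDerivAt R B w0) :
    ∀ v : E, ‖B v‖^2 ≤ ⟪v, B v⟫ := by
  intro v
  have hline := line_hasDerivAt hB v
  have hslope := hasDerivAt_iff_tendsto_slope.mp hline
  have hfirm : ∀ t : ℝ, t ≠ 0 →
      ‖slope (fun s : ℝ => R (w0 + s • v)) 0 t‖^2
        ≤ ⟪v, slope (fun s : ℝ => R (w0 + s • v)) 0 t⟫ := by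
    intro t ht
    have hfm := prox_firm pr hsel hRmin (w0 + t • v) w0
    rw [show w0 + t • v - w0 = t • v by abel] at hfm
    have eslope : R (w0 + t • v) - R w0
        = t • slope (fun s : ℝ => R (w0 + s • v)) 0 t := by
      rw [slope_def_module, sub_zero, smul_inv_smul₀ ht]
      simp
    rw [eslope, norm_smul, Real.norm_eq_abs, real_inner_smul_left,
      real_inner_smul_right] at hfm
    have ht2 : 0 < t^2 := by positivity
    nlinarith [sq_abs t, hfm]
  have h1 : Tendsto (fun t => ‖slope (fun s : ℝ => R (w0 + s • v)) 0 t‖^2)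
      (𝓝[≠] (0:ℝ)) (𝓝 (‖B v‖^2)) :=
    ((continuous_norm.tendsto (B v)).comp hslope).pow 2
  have h2 : Tendsto (fun t => ⟪v, slope (fun s : ℝ => R (w0 + s • v)) 0 t⟫)
      (𝓝[≠] (0:ℝ)) (𝓝 ⟪v, B v⟫) :=
    ((continuous_const.inner continuous_id).tendsto (B v)).comp hslope
  refine le_of_tendsto_of_tendsto h1 h2 ?_
  filter_upwards [self_mem_nhdsWithin] with t ht
  exact hfirm t ht

lemma nearest_unique {K : Set E} (pr : E → E)
    (hsel : ∀ y, pr y ∈ K ∧ dist y (pr y) = infDist y K)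
    {R : E → E}
    (hRmin : ∀ w x, fK K (R w) + ‖R w - w‖^2/2 ≤ fK K x + ‖x - w‖^2/2)
    {y : E} {B : E →L[ℝ] E} (hB : HasFDerivAt R B (y + pr y))
    (hinj : ∀ v, B v = 0 → v = 0)
    {q : E} (hq : q ∈ K) (hqd : dist y q = infDist y K) : q = pr y := by
  set v : E := q - pr y with hv
  -- along the segment, `R` is constant `y`
  have hseg : ∀ t : ℝ, 0 ≤ t → t ≤ 1 → R (y + pr y + t • v) = y := by
    intro t ht0 ht1
    have hsub : ∀ z, fK K y + ⟪pr y + t • v, z - y⟫ ≤ fK K z := by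
      intro z
      have h1 := subgradK (hsel y).1 (hsel y).2 z
      have h2 := subgradK hq hqd z
      have e : ⟪pr y + t • v, z - y⟫
          = (1 - t) * ⟪pr y, z - y⟫ + t * ⟪q, z - y⟫ := by
        rw [hv]
        rw [show pr y + t • (q - pr y) = (1-t) • pr y + t • q by module]
        rw [inner_add_left, real_inner_smul_left, real_inner_smul_left]
      rw [e]
      nlinarith [h1, h2]
    have := prox_of_subgrad hRmin hsub
    rw [show y + (pr y + t • v) = y + pr y + t • v by abel] at this
    exact this
  -- hence the directional derivative of `R` in direction `v` vanishes
  have hline := line_hasDerivAt hB v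
  have hslope := hasDerivAt_iff_tendsto_slope.mp hline
  have hsub : 𝓝[>] (0:ℝ) ≤ 𝓝[≠] (0:ℝ) :=
    nhdsWithin_mono 0 (fun t ht => ne_of_gt ht)
  have hslope' : Tendsto (slope (fun t : ℝ => R (y + pr y + t • v)) 0) (𝓝[>] (0:ℝ))
      (𝓝 (B v)) := hslope.mono_left hsub
  have hzero : slope (fun t : ℝ => R (y + pr y + t • v)) 0 =ᶠ[𝓝[>] (0:ℝ)] fun _ => 0 := by
    filter_upwards [Ioc_mem_nhdsGT_of_mem (Set.left_mem_Ico.mpr one_pos)] with t ht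
    rw [slope_def_module, sub_zero, hseg t ht.1.le ht.2,
      show (0:ℝ) • v = 0 from zero_smul _ _]
    rw [show y + pr y + (0:E) = y + pr y by abel, prox_phi pr hsel hRmin y, sub_self,
      smul_zero]
  have : Tendsto (fun _ : ℝ => (0:E)) (𝓝[>] (0:ℝ)) (𝓝 (B v)) :=
    hslope'.congr' hzero
  have hBv : B v = 0 := by
    have h0 : Tendsto (fun _ : ℝ => (0:E)) (𝓝[>] (0:ℝ)) (𝓝 0) := tendsto_const_nhds
    exact (tendsto_nhds_unique this h0).symm ▸ rfl
  have := hinj v hBv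
  rw [hv, sub_eq_zero] at this
  exact this

lemma pr_tendsto {K : Set E} (hcl : IsClosed K) (pr : E → E)
    (hsel : ∀ y, pr y ∈ K ∧ dist y (pr y) = infDist y K)
    {y : E} (huniq : ∀ q, q ∈ K → dist y q = infDist y K → q = pr y) :
    Tendsto pr (𝓝 y) (𝓝 (pr y)) := by
  rw [Metric.tendsto_nhds_nhds]
  intro ε hε
  set S : Set E := K ∩ closedBall y (infDist y K + 2) with hS
  have hScl : IsClosed S := hcl.inter Metric.isClosed_closedBall
  have hScomp : IsCompact S :=
    (isCompact_closedBall y (infDist y K + 2)).of_isClosed_subset hScl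
      Set.inter_subset_right
  set S' : Set E := S \ ball (pr y) ε with hS'
  have hS'comp : IsCompact S' :=
    hScomp.of_isClosed_subset (hScl.sdiff isOpen_ball) Set.diff_subset
  -- generic estimate: if `dist x y < δ ≤ 1` then `pr x ∈ S`
  have hgen : ∀ δ : ℝ, δ ≤ 1 → ∀ x : E, dist x y < δ → 0 < δ →
      pr x ∈ S ∧ dist y (pr x) ≤ infDist y K + 2*δ := by
    intro δ hδ1 x hxy hδ0
    have h1 : infDist x K ≤ infDist y K + dist x y := infDist_le_infDist_add_dist
    have h2 : dist y (pr x) ≤ dist y x + dist x (pr x) := dist_triangle _ _ _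
    rw [(hsel x).2] at h2
    have h3 : dist y x = dist x y := dist_comm _ _
    have h4 : dist y (pr x) ≤ infDist y K + 2*δ := by linarith
    refine ⟨⟨(hsel x).1, mem_closedBall.mpr ?_⟩, h4⟩
    rw [dist_comm]
    linarith
  by_cases hne' : S'.Nonempty
  · obtain ⟨q0, hq0S', hq0min⟩ :=
      hS'comp.exists_isMinOn hne'
        ((continuous_const.dist continuous_id :
          Continuous fun b : E => dist y (id b))).continuousOn
    have hq0K : q0 ∈ K := hq0S'.1.1
    have hq0ge : infDist y K ≤ dist y q0 := infDist_le_dist_of_mem hq0K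
    have hq0ne : infDist y K ≠ dist y q0 := by
      intro heq
      have : q0 = pr y := huniq q0 hq0K heq.symm
      have : q0 ∈ ball (pr y) ε := by rw [this]; exact mem_ball_self hε
      exact hq0S'.2 this
    set m : ℝ := dist y q0 - infDist y K with hm
    have hmpos : 0 < m := by
      rw [hm]; exact sub_pos.mpr (lt_of_le_of_ne hq0ge hq0ne)
    refine ⟨min 1 (m/4), lt_min one_pos (by linarith), fun {x} hxy => ?_⟩
    have hδ1 : min 1 (m/4) ≤ 1 := min_le_left _ _
    have hδm : min 1 (m/4) ≤ m/4 := min_le_right _ _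
    obtain ⟨hprxS, hprxd⟩ := hgen (min 1 (m/4)) hδ1 x hxy (lt_min one_pos (by linarith))
    by_contra hcon
    push_neg at hcon
    have hprx' : pr x ∈ S' := ⟨hprxS, by rw [mem_ball]; exact not_lt.mpr hcon⟩
    have := hq0min hprx'
    simp only [Function.comp] at this
    -- this : dist y q0 ≤ dist y (pr x)
    have h5 : dist y q0 ≤ infDist y K + 2 * min 1 (m/4) := le_trans this hprxd
    linarith
  · -- S' empty : projections of nearby points are automatically close
    refine ⟨1/2, by norm_num, fun {x} hxy => ?_⟩
    obtain ⟨hprxS, -⟩ := hgen (1/2) (by norm_num) x hxy (by norm_num)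
    have hnot : pr x ∉ S' := by
      rw [Set.not_nonempty_iff_eq_empty] at hne'
      simp [hne']
    have hmem : pr x ∈ ball (pr y) ε := by
      by_contra hcon
      exact hnot ⟨hprxS, hcon⟩
    rwa [mem_ball] at hmem

/-- **A.e. extended-sense differentiability of the metric projection.**
If `pr` is a Borel measurable selection of the metric projection onto the nonempty closed
set `K ⊆ ℝⁿ`, then for Lebesgue almost all `y` the projection is differentiable at `y` in the
extended sense, and the derivative matrix `A` is symmetric and positive semidefinite; in
particular its diagonal entries `∂ᵢ prᵢ (y) = Aᵢᵢ` are nonnegative. -/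
theorem metric_projection_ae_diffExtended
    (n : ℕ) (K : Set (EuclideanSpace ℝ (Fin n)))
    (hne : K.Nonempty) (hcl : IsClosed K)
    (pr : EuclideanSpace ℝ (Fin n) → EuclideanSpace ℝ (Fin n))
    (hmeas : Measurable pr)
    (hsel : ∀ y, pr y ∈ K ∧ dist y (pr y) = infDist y K) :
    ∀ᵐ y ∂(volume : Measure (EuclideanSpace ℝ (Fin n))),
      ∃ A : EuclideanSpace ℝ (Fin n) →L[ℝ] EuclideanSpace ℝ (Fin n),
        DiffExtended (uniqSet n K) pr y A ∧
        (∀ v w, ⟪A v, w⟫ = ⟪v, A w⟫) ∧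
        (∀ v, 0 ≤ ⟪A v, v⟫) ∧
        (∀ i : Fin n, 0 ≤ A (EuclideanSpace.single i 1) i) := by
  classical
  choose R hRmin using exists_prox (K := K) pr hsel
  have hlip : LipschitzWith 1 R := prox_lipschitz pr hsel hRmin
  -- the bad set
  set Z1 : Set (EuclideanSpace ℝ (Fin n)) := {w | ¬ DifferentiableAt ℝ R w} with hZ1def
  set Z2 : Set (EuclideanSpace ℝ (Fin n)) := {w | DifferentiableAt ℝ R w ∧ (fderiv ℝ R w).det = 0} with hZ2def
  have hZ1 : volume Z1 = 0 := by
    have hae : ∀ᵐ w ∂(volume : Measure (EuclideanSpace ℝ (Fin n))), DifferentiableAt ℝ R w :=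
      hlip.ae_differentiableAt
    exact ae_iff.mp hae
  have hIm1 : volume (R '' Z1) = 0 := lipschitz_image_null hlip hZ1
  have hIm2 : volume (R '' Z2) = 0 := by
    apply addHaar_image_eq_zero_of_det_fderivWithin_eq_zero (volume : Measure (EuclideanSpace ℝ (Fin n)))
      (f' := fun w => fderiv ℝ R w)
    · exact fun x hx => (hx.1.hasFDerivAt).hasFDerivWithinAt
    · exact fun x hx => hx.2
  have hBad : volume (R '' Z1 ∪ R '' Z2) = 0 :=
    le_antisymm (le_trans (measure_union_le _ _) (by rw [hIm1, hIm2, add_zero])) (zero_le)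
  -- the key pointwise claim
  have hmain : ∀ y : (EuclideanSpace ℝ (Fin n)), y ∉ R '' Z1 ∪ R '' Z2 →
      (y ∈ uniqSet n K) ∧
      ∃ A : (EuclideanSpace ℝ (Fin n)) →L[ℝ] (EuclideanSpace ℝ (Fin n)),
        ((fun x => pr x - pr y - A (x - y)) =o[𝓝 y] fun x => x - y) ∧
        (∀ v w, ⟪A v, w⟫ = ⟪v, A w⟫) ∧
        (∀ v, 0 ≤ ⟪A v, v⟫) ∧
        (∀ i : Fin n, 0 ≤ A (EuclideanSpace.single i 1) i) := by
    intro y hy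
    set w0 : (EuclideanSpace ℝ (Fin n)) := y + pr y with hw0
    have hRw0 : R w0 = y := prox_phi pr hsel hRmin y
    have hdiff : DifferentiableAt ℝ R w0 := by
      by_contra hcon
      exact hy (Or.inl ⟨w0, hcon, hRw0⟩)
    set B : (EuclideanSpace ℝ (Fin n)) →L[ℝ] (EuclideanSpace ℝ (Fin n)) := fderiv ℝ R w0 with hB
    have hBdiff : HasFDerivAt R B w0 := hdiff.hasFDerivAt
    have hdet : B.det ≠ 0 := by
      intro hcon
      exact hy (Or.inr ⟨w0, ⟨hdiff, hcon⟩, hRw0⟩)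
    -- build the inverse of B
    set Beq : (EuclideanSpace ℝ (Fin n)) ≃L[ℝ] (EuclideanSpace ℝ (Fin n)) :=
      ((↑B : (EuclideanSpace ℝ (Fin n)) →ₗ[ℝ] (EuclideanSpace ℝ (Fin n))).equivOfDetNeZero
        hdet).toContinuousLinearEquiv with hBeq
    have hBeqB : ∀ v, Beq v = B v := fun v => by
      rw [hBeq]
      simp [LinearMap.equivOfDetNeZero]
    set C : (EuclideanSpace ℝ (Fin n)) →L[ℝ] (EuclideanSpace ℝ (Fin n)) := (Beq.symm : (EuclideanSpace ℝ (Fin n)) →L[ℝ] EuclideanSpace ℝ (Fin n)) with hC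
    have hCB : ∀ v, C (B v) = v := fun v => by
      rw [hC, ← hBeqB]
      exact Beq.symm_apply_apply v
    have hBC : ∀ v, B (C v) = v := fun v => by
      rw [hC, ← hBeqB]
      exact Beq.apply_symm_apply v
    have hinj : ∀ v, B v = 0 → v = 0 := by
      intro v hv
      have := congrArg C hv
      rw [hCB, map_zero] at this
      exact this
    have huniq : ∀ q, q ∈ K → dist y q = infDist y K → q = pr y :=
      fun q hq hqd => nearest_unique pr hsel hRmin hBdiff hinj hq hqd
    have hyD : y ∈ uniqSet n K :=
      ⟨pr y, ⟨(hsel y).1, (hsel y).2⟩, fun q hq => huniq q hq.1 hq.2⟩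
    refine ⟨hyD, C - ContinuousLinearMap.id ℝ (EuclideanSpace ℝ (Fin n)), ?_, ?_, ?_, ?_⟩
    · -- the little-o statement
      have hΦcont : Tendsto (fun x : (EuclideanSpace ℝ (Fin n)) => x + pr x) (𝓝 y) (𝓝 w0) := by
        rw [hw0]
        exact tendsto_id.add (pr_tendsto hcl pr hsel huniq)
      have hlo0 : (fun w => R w - R w0 - B (w - w0)) =o[𝓝 w0] (fun w => w - w0) :=
        hBdiff.isLittleO
      have hlo : (fun x : (EuclideanSpace ℝ (Fin n)) => R (x + pr x) - R w0 - B ((x + pr x) - w0))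
          =o[𝓝 y] (fun x : (EuclideanSpace ℝ (Fin n)) => (x + pr x) - w0) := hlo0.comp_tendsto hΦcont
      have hlo' : (fun x : (EuclideanSpace ℝ (Fin n)) => x - y - B ((x + pr x) - w0))
          =o[𝓝 y] (fun x : (EuclideanSpace ℝ (Fin n)) => (x + pr x) - w0) := by
        refine hlo.congr (fun x => ?_) (fun x => rfl)
        rw [prox_phi pr hsel hRmin x, hRw0]
      -- the map x ↦ Φ x - w0 is O(x - y)
      have hbigO : (fun x : (EuclideanSpace ℝ (Fin n)) => (x + pr x) - w0) =O[𝓝 y] (fun x : (EuclideanSpace ℝ (Fin n)) => x - y) := by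
        rw [Asymptotics.isBigO_iff]
        refine ⟨2 * ‖C‖, ?_⟩
        have hsmall := (Asymptotics.isLittleO_iff).mp hlo'
          (c := 1/(2*(‖C‖+1))) (by positivity)
        filter_upwards [hsmall] with x hx
        have hid : (fun x : (EuclideanSpace ℝ (Fin n)) => x + pr x) x - w0
            = C (B ((x + pr x) - w0)) := (hCB _).symm
        have h1 : ‖(x + pr x) - w0‖ ≤ ‖C‖ * ‖B ((x + pr x) - w0)‖ := by
          calc ‖(x + pr x) - w0‖ = ‖C (B ((x + pr x) - w0))‖ := by rw [← hid]
            _ ≤ ‖C‖ * ‖B ((x + pr x) - w0)‖ := C.le_opNorm _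
        have h2 : ‖B ((x + pr x) - w0)‖
            ≤ ‖x - y - B ((x + pr x) - w0)‖ + ‖x - y‖ := by
          have := norm_sub_le (x - y - B ((x + pr x) - w0)) (x - y)
          have e : x - y - B ((x + pr x) - w0) - (x - y) = -(B ((x + pr x) - w0)) := by
            abel
          rw [e, norm_neg] at this
          linarith
        have hC0 : (0:ℝ) ≤ ‖C‖ := norm_nonneg _
        have hC1 : ‖C‖ * (1/(2*(‖C‖+1))) ≤ 1/2 := by
          rw [mul_one_div, div_le_div_iff₀ (by positivity) (by norm_num)]
          nlinarith
        have hxx : ‖x - y - B ((x + pr x) - w0)‖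
            ≤ 1/(2*(‖C‖+1)) * ‖(x + pr x) - w0‖ := hx
        have hfinal : ‖(x + pr x) - w0‖ ≤ 2 * ‖C‖ * ‖x - y‖ := by
          nlinarith [norm_nonneg ((x + pr x) - w0), norm_nonneg (x - y),
            norm_nonneg (x - y - B ((x + pr x) - w0))]
        exact hfinal
      -- identification of the remainder
      have hEq : ∀ x : (EuclideanSpace ℝ (Fin n)), pr x - pr y - (C - ContinuousLinearMap.id ℝ (EuclideanSpace ℝ (Fin n))) (x - y)
          = C (B ((x + pr x) - w0) - (x - y)) := by
        intro x
        have e1 : C (B ((x + pr x) - w0) - (x - y))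
            = C (B ((x + pr x) - w0)) - C (x - y) := map_sub _ _ _
        rw [e1, hCB]
        simp only [ContinuousLinearMap.sub_apply, ContinuousLinearMap.id_apply, hw0]
        abel
      have hrlo : (fun x : (EuclideanSpace ℝ (Fin n)) => B ((x + pr x) - w0) - (x - y))
          =o[𝓝 y] (fun x : (EuclideanSpace ℝ (Fin n)) => (x + pr x) - w0) := by
        refine hlo'.neg_left.congr (fun x => ?_) (fun x => rfl)
        abel
      have hClo : (fun x : (EuclideanSpace ℝ (Fin n)) => C (B ((x + pr x) - w0) - (x - y)))
          =o[𝓝 y] (fun x : (EuclideanSpace ℝ (Fin n)) => (x + pr x) - w0) :=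
        (C.isBigO_comp _ _).trans_isLittleO hrlo
      have := (hClo.trans_isBigO hbigO).congr (fun x => (hEq x).symm) (fun x => rfl)
      exact this
    · -- symmetry
      intro v w
      have hsymB := prox_deriv_symm pr hsel hRmin hBdiff
      have hCsym : ∀ v w : (EuclideanSpace ℝ (Fin n)), ⟪C v, w⟫ = ⟪v, C w⟫ := by
        intro v w
        calc ⟪C v, w⟫ = ⟪C v, B (C w)⟫ := by rw [hBC]
          _ = ⟪B (C w), C v⟫ := real_inner_comm _ _
          _ = ⟪B (C v), C w⟫ := (hsymB (C w) (C v)).symm ▸ rfl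
          _ = ⟪v, C w⟫ := by rw [hBC]
      simp only [ContinuousLinearMap.sub_apply, ContinuousLinearMap.id_apply,
        inner_sub_left, inner_sub_right]
      rw [hCsym v w]
    · -- positive semidefiniteness
      intro v
      have hfirmB := prox_deriv_firm pr hsel hRmin hBdiff
      have hkey : ‖v‖^2 ≤ ⟪C v, v⟫ := by
        have := hfirmB (C v)
        rw [hBC] at this
        calc ‖v‖^2 = ‖B (C v)‖^2 := by rw [hBC]
          _ ≤ ⟪C v, B (C v)⟫ := hfirmB (C v)
          _ = ⟪C v, v⟫ := by rw [hBC]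
      simp only [ContinuousLinearMap.sub_apply, ContinuousLinearMap.id_apply,
        inner_sub_left]
      rw [real_inner_self_eq_norm_sq]
      linarith
    · -- diagonal entries
      intro i
      have hfirmB := prox_deriv_firm pr hsel hRmin hBdiff
      set e : EuclideanSpace ℝ (Fin n) := EuclideanSpace.single i 1 with he
      have hkey : ‖e‖^2 ≤ ⟪C e, e⟫ := by
        calc ‖e‖^2 = ‖B (C e)‖^2 := by rw [hBC]
          _ ≤ ⟪C e, B (C e)⟫ := hfirmB (C e)
          _ = ⟪C e, e⟫ := by rw [hBC]
      have hpsd : 0 ≤ ⟪(C - ContinuousLinearMap.id ℝ (EuclideanSpace ℝ (Fin n))) e, e⟫ := by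
        simp only [ContinuousLinearMap.sub_apply, ContinuousLinearMap.id_apply,
          inner_sub_left]
        rw [real_inner_self_eq_norm_sq]
        linarith
      have heval : ⟪(C - ContinuousLinearMap.id ℝ (EuclideanSpace ℝ (Fin n))) e, e⟫
          = (C - ContinuousLinearMap.id ℝ (EuclideanSpace ℝ (Fin n))) e i := by
        rw [real_inner_comm, he, EuclideanSpace.inner_single_left]
        simp
      rw [heval] at hpsd
      exact hpsd
  -- conull of the uniqueness set
  have hDconull : volume ((Set.univ : Set (EuclideanSpace ℝ (Fin n))) \ uniqSet n K) = 0 := by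
    apply measure_mono_null _ hBad
    intro y hy
    by_contra hcon
    exact hy.2 (hmain y hcon).1
  -- conclusion
  have hae : ∀ᵐ y ∂(volume : Measure (EuclideanSpace ℝ (Fin n))), y ∉ R '' Z1 ∪ R '' Z2 := by
    rw [ae_iff]
    have : {y : EuclideanSpace ℝ (Fin n) | ¬ (y ∉ R '' Z1 ∪ R '' Z2)}
        = R '' Z1 ∪ R '' Z2 := by ext a; rw [Set.mem_setOf_eq, not_not]
    rw [this]
    exact hBad
  filter_upwards [hae] with y hy
  obtain ⟨hyD, A, hA, hAsym, hApsd, hAdiag⟩ := hmain y hy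
  refine ⟨A, ⟨hyD, Set.univ, Filter.univ_mem, hDconull, ?_⟩, hAsym, hApsd, hAdiag⟩
  exact hA.mono nhdsWithin_le_nhds
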